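/- Let ξ be a random variable and suppose ∇f_ξ(w) is an unbiased estimator of ∇f(w) with E‖∇f_ξ(w) - ∇f(w)‖² ≤ Γ²‖∇f(w)‖² + Λ² for constants Γ, Λ > 0. Then for any τ ∈ [0,2], E‖∇f_ξ(w)‖^τ ≤ (Γ^τ + 1)‖∇f(w)‖^τ + Λ^τ. -/

import Mathlib

open MeasureTheory

lemma real_rpow_add_le {a b p : ℝ} (ha : 0 ≤ a) (hb : 0 ≤ b) (hp : 0 ≤ p)
    (hp1 : p ≤ 1) : (a + b) ^ p ≤ a ^ p + b ^ p := by
  lift a to NNReal using ha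
  lift b to NNReal using hb
  exact_mod_cast NNReal.rpow_add_le_add_rpow a b hp hp1

theorem stochastic_gradient_moment_bound {d : ℕ} {Ω : Type*} [MeasurableSpace Ω]
    (μ : Measure Ω) [IsProbabilityMeasure μ]
    (g : Ω → EuclideanSpace ℝ (Fin d)) (G : EuclideanSpace ℝ (Fin d))
    (Γ Λ : ℝ) (hΓ : 0 < Γ) (hΛ : 0 < Λ)
    (hint : Integrable g μ)
    (hint2 : Integrable (fun ω => ‖g ω - G‖ ^ 2) μ)
    (hunbiased : ∫ ω, g ω ∂μ = G)
    (hvar : ∫ ω, ‖g ω - G‖ ^ 2 ∂μ ≤ Γ ^ 2 * ‖G‖ ^ 2 + Λ ^ 2)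
    (τ : ℝ) (hτ : τ ∈ Set.Icc (0:ℝ) 2) :
    ∫ ω, ‖g ω‖ ^ τ ∂μ ≤ (Γ ^ τ + 1) * ‖G‖ ^ τ + Λ ^ τ := by
  obtain ⟨hτ0, hτ2⟩ := hτ
  rcases eq_or_lt_of_le hτ0 with rfl | hτpos
  · simp only [Real.rpow_zero]
    rw [integral_const]
    simp
  set p : ℝ := τ / 2 with hp
  have hp0 : 0 < p := by positivity
  have hp1 : p ≤ 1 := by rw [hp]; linarith
  -- step 1 : integrability of ‖g‖²
  have hsq : ∀ ω, ‖g ω‖ ^ 2 = ‖g ω - G‖ ^ 2 + 2 * inner ℝ (g ω) G - ‖G‖ ^ 2 := by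
    intro ω
    have := @norm_sub_sq_real (EuclideanSpace ℝ (Fin d)) _ _ (g ω) G
    linarith
  have hinner : Integrable (fun ω => (inner ℝ (g ω) G : ℝ)) μ := by
    have : (fun ω => (inner ℝ (g ω) G : ℝ)) =
        fun ω => (innerSL ℝ).flip G (g ω) := by rfl
    rw [this]
    exact ((innerSL ℝ).flip G).integrable_comp hint
  have hintsq : Integrable (fun ω => ‖g ω‖ ^ 2) μ := by
    have : (fun ω => ‖g ω‖ ^ 2) =
        fun ω => ‖g ω - G‖ ^ 2 + 2 * inner ℝ (g ω) G - ‖G‖ ^ 2 := funext hsq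
    rw [this]
    exact ((hint2.add (hinner.const_mul 2)).sub (integrable_const _))
  -- step 2 : ∫ ‖g‖² ≤ (Γ²+1)‖G‖² + Λ²
  have hEsq : ∫ ω, ‖g ω‖ ^ 2 ∂μ ≤ (Γ ^ 2 + 1) * ‖G‖ ^ 2 + Λ ^ 2 := by
    have h1 : ∫ ω, ‖g ω‖ ^ 2 ∂μ
        = (∫ ω, ‖g ω - G‖ ^ 2 ∂μ) + 2 * inner ℝ G G - ‖G‖ ^ 2 := by
      have hg2 : Integrable (fun ω => 2 * (inner ℝ (g ω) G : ℝ)) μ :=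
        hinner.const_mul 2
      have hg1 : Integrable (fun ω => ‖g ω - G‖ ^ 2 + 2 * (inner ℝ (g ω) G : ℝ)) μ :=
        hint2.add hg2
      simp_rw [hsq]
      rw [integral_sub hg1 (integrable_const _), integral_add hint2 hg2,
        integral_const_mul, integral_const, probReal_univ]
      have : ∫ ω, (inner ℝ (g ω) G : ℝ) ∂μ = inner ℝ G G := by
        have h := ContinuousLinearMap.integral_comp_comm ((innerSL ℝ).flip G) hint
        simp only [ContinuousLinearMap.flip_apply, innerSL_apply_apply] at h
        rw [h, hunbiased]
      rw [this]
      simp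
    rw [h1, real_inner_self_eq_norm_sq]
    nlinarith
  -- step 3 : Jensen
  have hsq2 : ∀ x : ℝ, 0 ≤ x → (x ^ 2) ^ p = x ^ τ := by
    intro x hx
    rw [← Real.rpow_natCast x 2, ← Real.rpow_mul hx]
    norm_num [hp]
    congr 1
    ring
  have hrw : ∀ ω, ‖g ω‖ ^ τ = (‖g ω‖ ^ 2) ^ p :=
    fun ω => (hsq2 _ (norm_nonneg _)).symm
  have hmeas : AEStronglyMeasurable (fun ω => ‖g ω‖ ^ 2) μ := hintsq.1
  have hintp : Integrable (fun ω => (‖g ω‖ ^ 2) ^ p) μ := by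
    refine Integrable.mono' (hintsq.add (integrable_const 1)) ?_ ?_
    · exact (Real.continuous_rpow_const hp0.le).comp_aestronglyMeasurable hmeas
    · refine Filter.Eventually.of_forall fun ω => ?_
      have h2 : (0:ℝ) ≤ ‖g ω‖ ^ 2 := by positivity
      rw [Real.norm_of_nonneg (Real.rpow_nonneg h2 p)]
      rcases le_total (‖g ω‖ ^ 2) 1 with h | h
      · calc (‖g ω‖ ^ 2) ^ p ≤ 1 ^ p := Real.rpow_le_rpow h2 h hp0.le
          _ = 1 := Real.one_rpow p
          _ ≤ ‖g ω‖ ^ 2 + 1 := by linarith [h2]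
      · calc (‖g ω‖ ^ 2) ^ p ≤ (‖g ω‖ ^ 2) ^ (1:ℝ) :=
            Real.rpow_le_rpow_of_exponent_le h hp1
          _ ≤ ‖g ω‖ ^ 2 + 1 := by rw [Real.rpow_one]; linarith
  have hjensen : ∫ ω, (‖g ω‖ ^ 2) ^ p ∂μ ≤ (∫ ω, ‖g ω‖ ^ 2 ∂μ) ^ p := by
    have hconc := Real.concaveOn_rpow hp0.le hp1
    have hcont : ContinuousOn (fun x : ℝ => x ^ p) (Set.Ici 0) :=
      continuousOn_id.rpow_const (fun x _ => Or.inr hp0.le)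
    exact hconc.le_map_integral hcont isClosed_Ici
      (Filter.Eventually.of_forall fun ω => Set.mem_Ici.mpr (by positivity)) hintsq hintp
  calc ∫ ω, ‖g ω‖ ^ τ ∂μ = ∫ ω, (‖g ω‖ ^ 2) ^ p ∂μ := by simp_rw [hrw]
    _ ≤ (∫ ω, ‖g ω‖ ^ 2 ∂μ) ^ p := hjensen
    _ ≤ ((Γ ^ 2 + 1) * ‖G‖ ^ 2 + Λ ^ 2) ^ p := by
        refine Real.rpow_le_rpow ?_ hEsq hp0.le
        exact integral_nonneg fun ω => by positivity
    _ = (Γ ^ 2 * ‖G‖ ^ 2 + ‖G‖ ^ 2 + Λ ^ 2) ^ p := by ring_nf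
    _ ≤ (Γ ^ 2 * ‖G‖ ^ 2 + ‖G‖ ^ 2) ^ p + (Λ ^ 2) ^ p := by
        refine real_rpow_add_le (by positivity) (by positivity) hp0.le hp1
    _ ≤ ((Γ ^ 2 * ‖G‖ ^ 2) ^ p + (‖G‖ ^ 2) ^ p) + (Λ ^ 2) ^ p := by
        have := real_rpow_add_le (a := Γ ^ 2 * ‖G‖ ^ 2) (b := ‖G‖ ^ 2)
          (by positivity) (by positivity) hp0.le hp1
        linarith
    _ = (Γ ^ τ + 1) * ‖G‖ ^ τ + Λ ^ τ := by
        rw [Real.mul_rpow (by positivity) (by positivity),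
          hsq2 _ hΓ.le, hsq2 _ (norm_nonneg _), hsq2 _ hΛ.le]
        ring
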